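/- Let A be an invertible n×n matrix and Γ a full rank lattice. The following are equivalent: (a) ∑_{j=1}^∞ 1/#(A^{−j}(B(0,r)) ∩ Γ) = ∞ for every r > 0; (b) ∑_{j=1}^∞ 1/#(A^{−j}(B(0,r)) ∩ Γ) = ∞ for some r > 0. -/

import Mathlib

open MeasureTheory
open scoped ENNReal

private lemma encard_biUnion_le' {α ι : Type*} (t : Finset ι) (f : ι → Set α) :
    (⋃ i ∈ t, f i).encard ≤ ∑ i ∈ t, (f i).encard := by
  classical
  induction t using Finset.induction with
  | empty => simp
  | @insert a s h ih =>
    rw [Finset.sum_insert h, Finset.set_biUnion_insert]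
    exact (Set.encard_union_le _ _).trans (add_le_add le_rfl ih)

private lemma count_ball_le {E : Type*} [SeminormedAddCommGroup E] (T : E → E)
    (hT : ∀ a b : E, T a - T b = T (a - b)) (Γ : Set E)
    (hΓ : ∀ a ∈ Γ, ∀ b ∈ Γ, a - b ∈ Γ) (x : E) (r₀ : ℝ) :
    ((T '' Metric.ball x (r₀ / 2)) ∩ Γ).encard ≤
      ((T '' Metric.ball 0 r₀) ∩ Γ).encard := by
  rcases ((T '' Metric.ball x (r₀ / 2)) ∩ Γ).eq_empty_or_nonempty with h | ⟨γ, hγS, hγΓ⟩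
  · simp [h]
  · have hinj : Set.InjOn (fun y => y - γ) ((T '' Metric.ball x (r₀ / 2)) ∩ Γ) :=
      fun a _ b _ h => by simpa using h
    calc ((T '' Metric.ball x (r₀ / 2)) ∩ Γ).encard
        = ((fun y => y - γ) '' ((T '' Metric.ball x (r₀ / 2)) ∩ Γ)).encard :=
          hinj.encard_image.symm
      _ ≤ ((T '' Metric.ball 0 r₀) ∩ Γ).encard := by
          apply Set.encard_le_encard
          rintro _ ⟨y, ⟨⟨b₁, hb₁, rfl⟩, hyΓ⟩, rfl⟩
          obtain ⟨b₂, hb₂, rfl⟩ := hγS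
          refine ⟨⟨b₁ - b₂, ?_, (hT b₁ b₂).symm⟩, hΓ _ hyΓ _ hγΓ⟩
          rw [Metric.mem_ball, dist_zero_right, ← dist_eq_norm]
          calc dist b₁ b₂ ≤ dist b₁ x + dist x b₂ := dist_triangle _ _ _
            _ < r₀ / 2 + r₀ / 2 := by
                rw [Metric.mem_ball] at hb₁ hb₂
                rw [dist_comm x b₂]; exact add_lt_add hb₁ hb₂
            _ = r₀ := by ring

/-- The divergence of `∑_j 1/#(A^{-j}(B(0,r)) ∩ Γ)` does not depend on the radius `r`:
it diverges for every `r > 0` if and only if it diverges for some `r > 0`. -/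
theorem stmt8 (n : ℕ)
    (A : EuclideanSpace ℝ (Fin n) ≃ₗ[ℝ] EuclideanSpace ℝ (Fin n))
    (L : EuclideanSpace ℝ (Fin n) ≃ₗ[ℝ] EuclideanSpace ℝ (Fin n))
    (Γ : Set (EuclideanSpace ℝ (Fin n)))
    (hΓ : Γ = Set.range fun k : Fin n → ℤ => L (WithLp.toLp 2 (fun i => (k i : ℝ)))) :
    (∀ r : ℝ, 0 < r →
      ∑' j : ℕ, (1 : ℝ≥0∞) /
        (((A ^ (-(j + 1 : ℕ) : ℤ)) '' Metric.ball 0 r ∩ Γ).encard : ℝ≥0∞) = ∞) ↔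
    (∃ r : ℝ, 0 < r ∧
      ∑' j : ℕ, (1 : ℝ≥0∞) /
        (((A ^ (-(j + 1 : ℕ) : ℤ)) '' Metric.ball 0 r ∩ Γ).encard : ℝ≥0∞) = ∞) := by
  constructor
  · intro h
    exact ⟨1, one_pos, h 1 one_pos⟩
  · rintro ⟨r₀, hr₀, hsum⟩ r hr
    -- Γ is closed under subtraction
    have hΓsub : ∀ a ∈ Γ, ∀ b ∈ Γ, a - b ∈ Γ := by
      rintro a ha b hb
      rw [hΓ] at ha hb ⊢
      obtain ⟨k, rfl⟩ := ha
      obtain ⟨k', rfl⟩ := hb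
      refine ⟨k - k', ?_⟩
      have harg : (WithLp.toLp 2 (fun i => (((k - k') i : ℤ) : ℝ)) : EuclideanSpace ℝ (Fin n)) =
          (WithLp.toLp 2 (fun i => (k i : ℝ)) - WithLp.toLp 2 (fun i => (k' i : ℝ)) : EuclideanSpace ℝ (Fin n)) := by
        ext i
        simp [Pi.sub_apply]
      show L (WithLp.toLp 2 (fun i => (((k - k') i : ℤ) : ℝ))) = _
      rw [harg, map_sub]
    -- finite cover of the ball of radius r by balls of radius r₀/2
    obtain ⟨t, ht⟩ : ∃ t : Finset (EuclideanSpace ℝ (Fin n)),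
        Metric.ball (0 : EuclideanSpace ℝ (Fin n)) r ⊆
          ⋃ x ∈ t, Metric.ball x (r₀ / 2) := by
      have hcpt : IsCompact (Metric.closedBall (0 : EuclideanSpace ℝ (Fin n)) r) :=
        isCompact_closedBall _ _
      obtain ⟨t, ht⟩ := hcpt.elim_finite_subcover (fun x => Metric.ball x (r₀ / 2))
        (fun x => Metric.isOpen_ball)
        (fun y hy => Set.mem_iUnion.2 ⟨y, Metric.mem_ball_self (by linarith)⟩)
      exact ⟨t, Metric.ball_subset_closedBall.trans ht⟩
    set N : ℝ≥0∞ := (t.card : ℝ≥0∞) + 1 with hN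
    have hN0 : N ≠ 0 := by simp [hN]
    have hNtop : N ≠ ∞ := by simp [hN]
    -- pointwise bound on the counts
    have key : ∀ j : ℕ,
        N⁻¹ * ((1 : ℝ≥0∞) /
          (((A ^ (-(j + 1 : ℕ) : ℤ)) '' Metric.ball 0 r₀ ∩ Γ).encard : ℝ≥0∞)) ≤
        (1 : ℝ≥0∞) /
          (((A ^ (-(j + 1 : ℕ) : ℤ)) '' Metric.ball 0 r ∩ Γ).encard : ℝ≥0∞) := by
      intro j
      set T : EuclideanSpace ℝ (Fin n) → EuclideanSpace ℝ (Fin n) :=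
        ⇑(A ^ (-(j + 1 : ℕ) : ℤ)) with hT
      have hTsub : ∀ a b : EuclideanSpace ℝ (Fin n), T a - T b = T (a - b) :=
        fun a b => (map_sub _ a b).symm
      have hcount : ((T '' Metric.ball 0 r ∩ Γ)).encard ≤
          (t.card : ℕ∞) * ((T '' Metric.ball 0 r₀ ∩ Γ)).encard := by
        calc (T '' Metric.ball 0 r ∩ Γ).encard
            ≤ (⋃ x ∈ t, (T '' Metric.ball x (r₀ / 2) ∩ Γ)).encard := by
              apply Set.encard_le_encard
              rintro y ⟨⟨b, hb, rfl⟩, hyΓ⟩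
              obtain ⟨x, hx, hbx⟩ := Set.mem_iUnion₂.1 (ht hb)
              exact Set.mem_iUnion₂.2 ⟨x, hx, ⟨b, hbx, rfl⟩, hyΓ⟩
          _ ≤ ∑ x ∈ t, (T '' Metric.ball x (r₀ / 2) ∩ Γ).encard :=
              encard_biUnion_le' t _
          _ ≤ ∑ _x ∈ t, (T '' Metric.ball 0 r₀ ∩ Γ).encard :=
              Finset.sum_le_sum (fun x _ => count_ball_le T hTsub Γ hΓsub x r₀)
          _ = (t.card : ℕ∞) * (T '' Metric.ball 0 r₀ ∩ Γ).encard := by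
              rw [Finset.sum_const, nsmul_eq_mul]
      -- pass to ℝ≥0∞
      have hcast : ((T '' Metric.ball 0 r ∩ Γ).encard : ℝ≥0∞) ≤
          N * ((T '' Metric.ball 0 r₀ ∩ Γ).encard : ℝ≥0∞) := by
        calc ((T '' Metric.ball 0 r ∩ Γ).encard : ℝ≥0∞)
            ≤ (((t.card : ℕ∞) * (T '' Metric.ball 0 r₀ ∩ Γ).encard : ℕ∞) : ℝ≥0∞) := by
              exact_mod_cast hcount
          _ = (t.card : ℝ≥0∞) * ((T '' Metric.ball 0 r₀ ∩ Γ).encard : ℝ≥0∞) := by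
              push_cast; ring
          _ ≤ N * ((T '' Metric.ball 0 r₀ ∩ Γ).encard : ℝ≥0∞) := by
              apply mul_le_mul_left
              simp [hN]
      rw [one_div, one_div, ← ENNReal.mul_inv (Or.inl hN0) (Or.inl hNtop)]
      exact ENNReal.inv_le_inv' hcast
    have := ENNReal.tsum_le_tsum key
    rw [ENNReal.tsum_mul_left, hsum, ENNReal.mul_top (by simpa using hNtop)] at this
    exact top_le_iff.1 this
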